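/- The cutoff semigroup satisfies e^{-t·Deg} f ≤ P_t^φ f ≤ P_t f for all t ≥ 0 and 0 ≤ f ≤ φ, where Deg(x) = (1/m(x)) Σ_y w(x,y) and (e^{-t·Deg}f)(x) = e^{-t·Deg(x)}f(x). -/

import Mathlib

open scoped BigOperators

/-- A locally finite weighted graph. -/
structure WeightedGraph (V : Type) where
  w : V → V → ℝ
  m : V → ℝ
  symm : ∀ x y, w x y = w y x
  loopless : ∀ x, w x x = 0
  nonneg : ∀ x y, 0 ≤ w x y
  mpos : ∀ x, 0 < m x
  locFin : ∀ x, Set.Finite {y | w x y ≠ 0}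

namespace WeightedGraph

variable {V : Type} (G : WeightedGraph V)

/-- The underlying simple graph. -/
def toSimple : SimpleGraph V where
  Adj x y := x ≠ y ∧ G.w x y ≠ 0
  symm := by
    constructor; intro x y h
    exact ⟨h.1.symm, by rw [G.symm y x]; exact h.2⟩
  loopless := by constructor; intro x h; exact h.1 rfl

/-- The combinatorial graph distance. -/
noncomputable def dist (x y : V) : ℕ := G.toSimple.dist x y

/-- The graph Laplacian. -/
noncomputable def lap (f : V → ℝ) (x : V) : ℝ :=
  (∑ᶠ y, G.w x y * (f y - f x)) / G.m x

/-- The weighted vertex degree. -/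
noncomputable def deg (x : V) : ℝ := (∑ᶠ y, G.w x y) / G.m x

/-- `f` is `1`-Lipschitz with respect to the combinatorial distance. -/
def Lip1 (f : V → ℝ) : Prop := ∀ x y, |f x - f y| ≤ (G.dist x y : ℝ)

/-- The Ollivier curvature, via the limit-free formula
`κ(x,y) = inf {∇_{xy} Δ f : f ∈ Lip(1) ∩ C_c(V), ∇_{yx} f = 1}`. -/
noncomputable def curv (x y : V) : ℝ :=
  sInf { c | ∃ f : V → ℝ, G.Lip1 f ∧ (Function.support f).Finite ∧
    f y - f x = (G.dist x y : ℝ) ∧ c = (G.lap f x - G.lap f y) / (G.dist x y : ℝ) }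

end WeightedGraph

/-- `u` is a non-negative bounded solution of the heat equation with initial datum `f`. -/
def IsHeatSolution {V : Type} (G : WeightedGraph V) (f : V → ℝ) (u : ℝ → V → ℝ) : Prop :=
  u 0 = f ∧ (∀ t x, 0 ≤ t → 0 ≤ u t x) ∧ (∃ C, ∀ t x, 0 ≤ t → u t x ≤ C) ∧
  ∀ x t, 0 ≤ t → HasDerivWithinAt (fun s => u s x) (G.lap (u t) x) (Set.Ici 0) t

/-- `P` is the minimal heat semigroup: for every non-negative bounded `f`, `t ↦ P t f` is the
smallest non-negative bounded solution of the heat equation with initial datum `f`; on signed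
bounded functions it is given by linearity from the positive and negative parts. -/
def IsHeatSemigroup {V : Type} (G : WeightedGraph V) (P : ℝ → (V → ℝ) → V → ℝ) : Prop :=
  (∀ f : V → ℝ, (∀ x, 0 ≤ f x) → (∃ C, ∀ x, f x ≤ C) →
    IsHeatSolution G f (fun t => P t f) ∧
    ∀ u, IsHeatSolution G f u → ∀ t x, 0 ≤ t → P t f x ≤ u t x) ∧
  (∀ f : V → ℝ, (∃ C, ∀ x, |f x| ≤ C) → ∀ t x,
    P t f x = P t (fun y => max (f y) 0) x - P t (fun y => max (-f y) 0) x)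

/-- The one-step cutoff operator `Q_t^φ f := (P_t f) ∧ φ`. -/
noncomputable def Qcut {V : Type} (G : WeightedGraph V) (P : ℝ → (V → ℝ) → V → ℝ)
    (φ : V → ℝ) (t : ℝ) (f : V → ℝ) : V → ℝ :=
  fun x => min (P t f x) (φ x)

/-- The cutoff semigroup `P_t^φ f := inf_{t₁+⋯+t_n = t} Q_{t₁}^φ ⋯ Q_{t_n}^φ f`. -/
noncomputable def Pcut {V : Type} (G : WeightedGraph V) (P : ℝ → (V → ℝ) → V → ℝ)
    (φ : V → ℝ) (t : ℝ) (f : V → ℝ) (x : V) : ℝ :=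
  sInf { c | ∃ l : List ℝ, (∀ s ∈ l, 0 ≤ s) ∧ l.sum = t ∧
    c = (l.foldr (fun s g => Qcut G P φ s g) f) x }

section Aux

variable {V : Type} (G : WeightedGraph V)

lemma deg_nonneg' (x : V) : 0 ≤ G.deg x :=
  div_nonneg (finsum_nonneg fun y => G.nonneg x y) (G.mpos x).le

lemma lap_lower (u : V → ℝ) (hu : ∀ y, 0 ≤ u y) (x : V) :
    -G.deg x * u x ≤ G.lap u x := by
  classical
  set S := (G.locFin x).toFinset with hS
  have hsub : ∀ g : V → ℝ, (∀ y, G.w x y = 0 → g y = 0) →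
      ∑ᶠ y, g y = ∑ y ∈ S, g y := by
    intro g hg
    refine finsum_eq_sum_of_support_subset _ ?_
    intro y hy
    simp only [hS, Set.Finite.coe_toFinset, Set.mem_setOf_eq]
    intro hw; exact hy (hg y hw)
  have h1 : ∑ᶠ y, G.w x y * (u y - u x) = ∑ y ∈ S, G.w x y * (u y - u x) :=
    hsub _ (fun y hw => by rw [hw, zero_mul])
  have h2 : ∑ᶠ y, G.w x y = ∑ y ∈ S, G.w x y := hsub _ (fun y hw => hw)
  have hsum : ∑ y ∈ S, -(G.w x y * u x) ≤ ∑ y ∈ S, G.w x y * (u y - u x) := by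
    refine Finset.sum_le_sum fun y _ => ?_
    have := G.nonneg x y
    nlinarith [hu y, hu x]
  have hm := G.mpos x
  unfold WeightedGraph.lap WeightedGraph.deg
  rw [h1, h2]
  have h3 : -((∑ y ∈ S, G.w x y) / G.m x) * u x = (∑ y ∈ S, -(G.w x y * u x)) / G.m x := by
    rw [Finset.sum_neg_distrib, ← Finset.sum_mul]
    field_simp
  rw [h3]
  exact div_le_div_of_nonneg_right hsum hm.le

/-- Lower bound for nonnegative heat solutions. -/
lemma sol_lower (g : V → ℝ) (u : ℝ → V → ℝ) (hu : IsHeatSolution G g u)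
    (x : V) (t : ℝ) (ht : 0 ≤ t) :
    Real.exp (-t * G.deg x) * g x ≤ u t x := by
  obtain ⟨h0, hpos, _, hderiv⟩ := hu
  set d := G.deg x with hd
  have hd0 : 0 ≤ d := deg_nonneg' G x
  set F : ℝ → ℝ := fun s => Real.exp (s * d) * u s x with hF
  have hFd : ∀ s ∈ Set.Ici (0 : ℝ), HasDerivWithinAt F
      (Real.exp (s * d) * d * u s x + Real.exp (s * d) * G.lap (u s) x) (Set.Ici 0) s := by
    intro s hs
    have h1 : HasDerivAt (fun r : ℝ => Real.exp (r * d)) (Real.exp (s * d) * d) s :=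
      (hasDerivAt_mul_const d).exp
    exact h1.hasDerivWithinAt.mul (hderiv x s hs)
  have hcont : ContinuousOn F (Set.Ici 0) := fun s hs =>
    (hFd s hs).continuousWithinAt
  have hmono : MonotoneOn F (Set.Ici 0) := by
    have hint : interior (Set.Ici (0:ℝ)) = Set.Ioi 0 := interior_Ici
    refine monotoneOn_of_deriv_nonneg (convex_Ici 0) hcont ?_ ?_
    · intro s hs
      rw [hint] at hs
      exact ((hFd s (Set.mem_Ici.mpr (le_of_lt hs))).hasDerivAt (Ici_mem_nhds hs)).differentiableAt.differentiableWithinAt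
    · intro s hs
      rw [hint] at hs
      rw [((hFd s (Set.mem_Ici.mpr (le_of_lt hs))).hasDerivAt (Ici_mem_nhds hs)).deriv]
      have hlap := lap_lower G (u s) (fun y => hpos s y (le_of_lt hs)) x
      have hup := hpos s x (le_of_lt hs)
      have he : (0:ℝ) < Real.exp (s * d) := Real.exp_pos _
      nlinarith
  have h01 : F 0 ≤ F t := hmono (Set.mem_Ici.mpr (le_refl 0)) (Set.mem_Ici.mpr ht) ht
  have hF0 : F 0 = g x := by simp [hF, h0]
  rw [hF0] at h01
  have := mul_le_mul_of_nonneg_left h01 (Real.exp_pos (-t * d)).le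
  calc Real.exp (-t * d) * g x ≤ Real.exp (-t * d) * (Real.exp (t * d) * u t x) := this
    _ = u t x := by rw [← mul_assoc, ← Real.exp_add]; ring_nf; simp

end Aux

/-- The cutoff semigroup satisfies `e^{-t Deg} f ≤ P_t^φ f ≤ P_t f`. -/
theorem stmt7 {V : Type} [Countable V] (G : WeightedGraph V)
    (P : ℝ → (V → ℝ) → V → ℝ) (hP : IsHeatSemigroup G P)
    (φ : V → ℝ) (hφ0 : ∀ x, 0 ≤ φ x) (hφfin : (Function.support φ).Finite)
    (f : V → ℝ) (hf0 : ∀ x, 0 ≤ f x) (hfφ : ∀ x, f x ≤ φ x)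
    (t : ℝ) (ht : 0 ≤ t) :
    ∀ x, Real.exp (-t * G.deg x) * f x ≤ Pcut G P φ t f x ∧
      Pcut G P φ t f x ≤ P t f x := by
  classical
  have hφbd : ∀ y, φ y ≤ ∑ z ∈ hφfin.toFinset, φ z := by
    intro y
    by_cases hy : φ y = 0
    · rw [hy]; exact Finset.sum_nonneg fun z _ => hφ0 z
    · exact Finset.single_le_sum (fun z _ => hφ0 z) (hφfin.mem_toFinset.mpr hy)
  have key : ∀ l : List ℝ, (∀ s ∈ l, 0 ≤ s) →
      (∀ y, 0 ≤ (l.foldr (fun s g => Qcut G P φ s g) f) y) ∧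
      (∀ y, (l.foldr (fun s g => Qcut G P φ s g) f) y ≤ φ y) ∧ (0 ≤ l.sum) ∧
      (∀ y, Real.exp (-(l.sum) * G.deg y) * f y ≤
        (l.foldr (fun s g => Qcut G P φ s g) f) y) := by
    intro l
    induction l with
    | nil =>
      intro _
      refine ⟨hf0, hfφ, le_refl 0, fun y => ?_⟩
      simp
    | cons s l ih =>
      intro hl
      have hs : 0 ≤ s := hl s List.mem_cons_self
      obtain ⟨hg0, hgφ, hls, hglow⟩ := ih (fun r hr => hl r (List.mem_cons_of_mem s hr))
      set g : V → ℝ := l.foldr (fun s g => Qcut G P φ s g) f with hg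
      have hgbd : ∃ C, ∀ y, g y ≤ C :=
        ⟨∑ z ∈ hφfin.toFinset, φ z, fun y => (hgφ y).trans (hφbd y)⟩
      have hsol := (hP.1 g hg0 hgbd).1
      have hPpos : ∀ y, 0 ≤ P s g y := fun y => hsol.2.1 s y hs
      have hPlow : ∀ y, Real.exp (-s * G.deg y) * g y ≤ P s g y :=
        fun y => sol_lower G g _ hsol y s hs
      have hfold : ∀ y, ((s :: l).foldr (fun s g => Qcut G P φ s g) f) y
          = min (P s g y) (φ y) := fun y => rfl
      refine ⟨fun y => ?_, fun y => ?_, ?_, fun y => ?_⟩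
      · rw [hfold y]; exact le_min (hPpos y) (hφ0 y)
      · rw [hfold y]; exact min_le_right _ _
      · rw [List.sum_cons]; exact add_nonneg hs hls
      · rw [hfold y, List.sum_cons]
        have hd0 : 0 ≤ G.deg y := deg_nonneg' G y
        refine le_min ?_ ?_
        · have h1 : Real.exp (-(s + l.sum) * G.deg y) * f y
              = Real.exp (-s * G.deg y) * (Real.exp (-(l.sum) * G.deg y) * f y) := by
            rw [← mul_assoc, ← Real.exp_add]; ring_nf
          rw [h1]
          calc Real.exp (-s * G.deg y) * (Real.exp (-(l.sum) * G.deg y) * f y)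
              ≤ Real.exp (-s * G.deg y) * g y :=
                mul_le_mul_of_nonneg_left (hglow y) (Real.exp_pos _).le
            _ ≤ P s g y := hPlow y
        · have he1 : Real.exp (-(s + l.sum) * G.deg y) ≤ 1 := by
            rw [Real.exp_le_one_iff]
            nlinarith
          nlinarith [hf0 y, hfφ y, Real.exp_pos (-(s + l.sum) * G.deg y)]
  intro x
  have hmem : min (P t f x) (φ x) ∈ { c | ∃ l : List ℝ, (∀ s ∈ l, 0 ≤ s) ∧ l.sum = t ∧
      c = (l.foldr (fun s g => Qcut G P φ s g) f) x } := by
    refine ⟨[t], ?_, by simp, rfl⟩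
    intro s hs
    rw [List.mem_singleton] at hs
    exact hs ▸ ht
  have hbdd : BddBelow { c | ∃ l : List ℝ, (∀ s ∈ l, 0 ≤ s) ∧ l.sum = t ∧
      c = (l.foldr (fun s g => Qcut G P φ s g) f) x } := by
    refine ⟨0, ?_⟩
    rintro c ⟨l, hl, -, rfl⟩
    exact (key l hl).1 x
  constructor
  · refine le_csInf ⟨_, hmem⟩ ?_
    rintro c ⟨l, hl, hsum, rfl⟩
    have := (key l hl).2.2.2 x
    rwa [hsum] at this
  · exact (csInf_le hbdd hmem).trans (min_le_left _ _)
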